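/- Under the assumption V(0) = (b* - c_s)/F(b*) > c_b, the function ĥ(y) = V(y) - y - c_b satisfies: there exists a unique d̄ ∈ (0, b*) with ĥ(d̄) = 0, ĥ > 0 on [0, d̄), and ĥ < 0 on (d̄, ∞). -/

import Mathlib

theorem hhat_unique_root (c_s c_b : ℝ) (hcs : 0 < c_s) (hcb : 0 < c_b)
    (F : ℝ → ℝ) (hdiff : Differentiable ℝ F)
    (hFpos : ∀ y, 0 ≤ y → 0 < F y)
    (hFmono : StrictMonoOn F (Set.Ici 0))
    (hFconv : StrictConvexOn ℝ (Set.Ici 0) F)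
    (hF0 : F 0 = 1)
    (b : ℝ) (hb : c_s < b) (hroot : F b = (b - c_s) * deriv F b)
    (V : ℝ → ℝ)
    (hV : ∀ y, V y = if y < b then (b - c_s) / F b * F y else y - c_s)
    (hnontriv : c_b < (b - c_s) / F b)
    (hhat : ℝ → ℝ) (hh : ∀ y, hhat y = V y - (y + c_b)) :
    ∃ d : ℝ, d ∈ Set.Ioo 0 b ∧ hhat d = 0 ∧
      (∀ y, 0 ≤ y → y < d → 0 < hhat y) ∧
      (∀ y, d < y → hhat y < 0) ∧
      (∀ d' : ℝ, 0 ≤ d' → hhat d' = 0 → d' = d) := by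
  set K : ℝ := (b - c_s) / F b with hKdef
  have hb0 : (0:ℝ) < b := lt_trans hcs hb
  have hFb : 0 < F b := hFpos b hb0.le
  have hK0 : 0 < K := lt_trans hcb hnontriv
  have hKFb : K * F b = b - c_s := div_mul_cancel₀ _ (ne_of_gt hFb)
  set g : ℝ → ℝ := fun y => K * F y - (y + c_b) with hgdef
  -- hhat = g on [0, b]
  have hgb : g b = -(c_s + c_b) := by simp [hgdef]; linarith [hKFb]
  have hgbneg : g b < 0 := by rw [hgb]; linarith
  have heq : ∀ y, y < b → hhat y = g y := by
    intro y hy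
    rw [hh, hV, if_pos hy]
  have hge : ∀ y, b ≤ y → hhat y = -(c_s + c_b) := by
    intro y hy
    rw [hh, hV, if_neg (not_lt.mpr hy)]; ring
  -- convexity inequality for g
  have hgconv : ∀ x z : ℝ, 0 ≤ x → x < z → ∀ a c : ℝ, 0 < a → 0 < c →
      a + c = 1 → g (a*x + c*z) < a * g x + c * g z := by
    intro x z hx hxz a c ha hc hac
    have hz : (0:ℝ) ≤ z := le_of_lt (lt_of_le_of_lt hx hxz)
    have := hFconv.2 (Set.mem_Ici.mpr hx) (Set.mem_Ici.mpr hz) (ne_of_lt hxz)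
      ha hc hac
    simp only [smul_eq_mul] at this
    simp only [hgdef]
    nlinarith [this, hK0]
  -- existence of root via IVT
  have hg0 : 0 < g 0 := by simp [hgdef, hF0]; linarith
  have hgcont : ContinuousOn g (Set.Icc 0 b) := by
    apply ContinuousOn.sub
    · exact (continuous_const.mul hdiff.continuous).continuousOn
    · exact (continuous_id.add continuous_const).continuousOn
  have : (0:ℝ) ∈ Set.Ioo (g b) (g 0) := ⟨hgbneg, hg0⟩
  obtain ⟨d, hd, hgd⟩ := intermediate_value_Ioo' hb0.le hgcont this
  obtain ⟨hd0, hdb⟩ := hd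
  clear_value K g
  -- sign lemmas
  have hneg : ∀ y, d < y → hhat y < 0 := by
    intro y hy
    rcases le_or_gt b y with hby | hyb
    · rw [hge y hby]; linarith
    · rw [heq y hyb]
      have hbd : 0 < b - d := by linarith
      have ha : 0 < (b - y)/(b - d) := div_pos (by linarith) hbd
      have hc : 0 < (y - d)/(b - d) := div_pos (by linarith) hbd
      have hac : (b - y)/(b - d) + (y - d)/(b - d) = 1 := by
        field_simp; ring
      have hyy : (b - y)/(b - d)*d + (y - d)/(b - d)*b = y := by
        field_simp; ring
      have := hgconv d b hd0.le hdb _ _ ha hc hac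
      rw [hyy, hgd, mul_zero, zero_add] at this
      have h2 : (y - d)/(b - d) * g b < 0 := mul_neg_of_pos_of_neg hc hgbneg
      linarith
  have hpos : ∀ y, 0 ≤ y → y < d → 0 < hhat y := by
    intro y hy0 hyd
    rw [heq y (lt_trans hyd hdb)]
    have hby : 0 < b - y := by linarith
    have ha : 0 < (b - d)/(b - y) := div_pos (by linarith) hby
    have hc : 0 < (d - y)/(b - y) := div_pos (by linarith) hby
    have hac : (b - d)/(b - y) + (d - y)/(b - y) = 1 := by
      field_simp; ring
    have hdd : (b - d)/(b - y)*y + (d - y)/(b - y)*b = d := by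
      field_simp; ring
    have := hgconv y b hy0 (by linarith) _ _ ha hc hac
    rw [hdd, hgd] at this
    by_contra hcon
    push_neg at hcon
    have h1 : (b - d)/(b - y) * g y ≤ 0 := mul_nonpos_of_nonneg_of_nonpos ha.le hcon
    have h2 : (d - y)/(b - y) * g b < 0 := mul_neg_of_pos_of_neg hc hgbneg
    linarith
  refine ⟨d, ⟨hd0, hdb⟩, by rw [heq d hdb]; exact hgd, hpos, hneg, ?_⟩
  intro d' hd' hzero
  rcases lt_trichotomy d' d with h | h | h
  · exact absurd hzero (ne_of_gt (hpos d' hd' h))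
  · exact h
  · exact absurd hzero (ne_of_lt (hneg d' h))
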